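/- (Theorem 1.) Let 1 ≤ p ≤ ∞ and let q be its conjugate exponent, 1/p + 1/q = 1. Suppose that for some z_0 ∈ ℂ every solution of the vector equation (1v) at z_0 belongs to l^p_n and every solution of the vector equation (2v) at z_0 belongs to l^q_n. Then for every z ∈ ℂ, every solution of (1v) at z belongs to l^p_n and every solution of (2v) at z belongs to l^q_n. -/

import Mathlib

open Matrix Filter
open scoped BigOperators ENNReal

/-- Square `n × n` complex matrices. -/
abbrev Mat (n : ℕ) := Matrix (Fin n) (Fin n) ℂ

/-- `Alo b j` is the coefficient `A_{j,j-1}` (so `Alo b 0 = A_{0,-1} = -E` and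
`Alo b (j+1) = A_{j+1,j} = b j`). -/
def Alo {n : ℕ} (b : ℕ → Mat n) : ℕ → Mat n
  | 0 => -1
  | j + 1 => b j

/-- `Aup a j` is the coefficient `A_{j-1,j}` (so `Aup a 0 = A_{-1,0} = -E` and
`Aup a (j+1) = A_{j,j+1} = a j`). -/
def Aup {n : ℕ} (a : ℕ → Mat n) : ℕ → Mat n
  | 0 => -1
  | j + 1 => a j

/-- Matrix equation (1).  Sequences are indexed by `ℕ`, where index `k` represents the
paper index `k - 1` (so index `0` is the paper index `-1`).  Here `d j = A_{j,j}`,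
`a j = A_{j,j+1}`, `b j = A_{j+1,j}`. -/
def SolEq1 {n : ℕ} (d a b : ℕ → Mat n) (z : ℂ) (Y : ℕ → Mat n) : Prop :=
  ∀ j : ℕ, Alo b j * Y j + d j * Y (j + 1) + a j * Y (j + 2) = z • Y (j + 1)

/-- Matrix equation (2), with the same index shift. -/
def SolEq2 {n : ℕ} (d a b : ℕ → Mat n) (z : ℂ) (Y : ℕ → Mat n) : Prop :=
  ∀ j : ℕ, Y j * Aup a j + Y (j + 1) * d j + Y (j + 2) * b j = z • Y (j + 1)

/-- Vector equation (1v), with the same index shift. -/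
def SolEq1v {n : ℕ} (d a b : ℕ → Mat n) (z : ℂ) (u : ℕ → Fin n → ℂ) : Prop :=
  ∀ j : ℕ, Alo b j *ᵥ u j + d j *ᵥ u (j + 1) + a j *ᵥ u (j + 2) = z • u (j + 1)

/-- Vector equation (2v) for the row vectors `v_j^*`, with the same index shift. -/
def SolEq2v {n : ℕ} (d a b : ℕ → Mat n) (z : ℂ) (v : ℕ → Fin n → ℂ) : Prop :=
  ∀ j : ℕ, star (v j) ᵥ* Aup a j + star (v (j + 1)) ᵥ* d j + star (v (j + 2)) ᵥ* b j
    = z • star (v (j + 1))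

/-! ### Auxiliary development -/

section Aux

/-- The fundamental matrix solution of equation (1) with prescribed first two values. -/
noncomputable def sol {n : ℕ} (d a b : ℕ → Mat n) (z0 : ℂ) (Y0 Y1 : Mat n) : ℕ → Mat n
  | 0 => Y0
  | 1 => Y1
  | (j+2) => (a j)⁻¹ * (z0 • sol d a b z0 Y0 Y1 (j+1) - Alo b j * sol d a b z0 Y0 Y1 j
      - d j * sol d a b z0 Y0 Y1 (j+1))

lemma sol_isSol {n : ℕ} (d a b : ℕ → Mat n) (ha : ∀ j, IsUnit (a j)) (z0 : ℂ) (Y0 Y1 : Mat n) :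
    SolEq1 d a b z0 (sol d a b z0 Y0 Y1) := by
  intro j
  rw [show sol d a b z0 Y0 Y1 (j+2) = (a j)⁻¹ * (z0 • sol d a b z0 Y0 Y1 (j+1)
      - Alo b j * sol d a b z0 Y0 Y1 j - d j * sol d a b z0 Y0 Y1 (j+1)) from rfl,
    Matrix.mul_nonsing_inv_cancel_left _ _ ((Matrix.isUnit_iff_isUnit_det _).mp (ha j))]
  abel

/-- The fundamental matrix solution of equation (2) with prescribed first two values. -/
noncomputable def rsol {n : ℕ} (d a b : ℕ → Mat n) (z0 : ℂ) (Y0 Y1 : Mat n) : ℕ → Mat n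
  | 0 => Y0
  | 1 => Y1
  | (j+2) => (z0 • rsol d a b z0 Y0 Y1 (j+1) - rsol d a b z0 Y0 Y1 j * Aup a j
      - rsol d a b z0 Y0 Y1 (j+1) * d j) * (b j)⁻¹

lemma rsol_isSol {n : ℕ} (d a b : ℕ → Mat n) (hb : ∀ j, IsUnit (b j)) (z0 : ℂ) (Y0 Y1 : Mat n) :
    SolEq2 d a b z0 (rsol d a b z0 Y0 Y1) := by
  intro j
  rw [show rsol d a b z0 Y0 Y1 (j+2) = (z0 • rsol d a b z0 Y0 Y1 (j+1)
      - rsol d a b z0 Y0 Y1 j * Aup a j - rsol d a b z0 Y0 Y1 (j+1) * d j) * (b j)⁻¹ from rfl,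
    Matrix.nonsing_inv_mul_cancel_right _ _ ((Matrix.isUnit_iff_isUnit_det _).mp (hb j))]
  abel

/-- Constancy of the mixed Wronskian. -/
lemma wronsk {n : ℕ} {d a b : ℕ → Mat n} {z0 : ℂ} {X Y : ℕ → Mat n}
    (hX : SolEq2 d a b z0 X) (hY : SolEq1 d a b z0 Y) (j : ℕ) :
    X (j+1) * Alo b j * Y j - X j * Aup a j * Y (j+1)
      = X 1 * Alo b 0 * Y 0 - X 0 * Aup a 0 * Y 1 := by
  induction j with
  | zero => rfl
  | succ j ih =>
    rw [← ih]
    have h1 : a j * Y (j+2) = z0 • Y (j+1) - Alo b j * Y j - d j * Y (j+1) := by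
      have := hY j; rw [← this]; abel
    have h2 : X (j+2) * b j = z0 • X (j+1) - X j * Aup a j - X (j+1) * d j := by
      have := hX j; rw [← this]; abel
    have e1 : Alo b (j+1) = b j := rfl
    have e2 : Aup a (j+1) = a j := rfl
    rw [e1, e2, h2, Matrix.mul_assoc (X (j+1)) (a j) (Y (j+2)), h1]
    simp only [Matrix.sub_mul, Matrix.mul_sub, Matrix.smul_mul, Matrix.mul_smul, Matrix.mul_assoc]
    abel

/-- From the "row times column" Wronskian relations one obtains the "column times row"
relations, by inverting a `2n × 2n` block matrix. -/
lemma myflip {n : ℕ} {Al Au P Q P' Q' Pt Qt Pt' Qt' : Matrix (Fin n) (Fin n) ℂ}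
    (hAu : IsUnit Au)
    (h1 : Pt' * Al * P - Pt * Au * P' = 0)
    (h2 : Pt' * Al * Q - Pt * Au * Q' = 1)
    (h3 : Qt' * Al * P - Qt * Au * P' = -1)
    (h4 : Qt' * Al * Q - Qt * Au * Q' = 0) :
    (P * Qt - Q * Pt = 0) ∧ ((P' * Qt - Q' * Pt) * Au = 1) := by
  have hLC : (fromBlocks (Pt' * Al) (-(Pt * Au)) (Qt' * Al) (-(Qt * Au))) *
      (fromBlocks P Q P' Q') = fromBlocks 0 1 (-1) 0 := by
    rw [Matrix.fromBlocks_multiply, Matrix.fromBlocks_inj]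
    refine ⟨?_, ?_, ?_, ?_⟩ <;>
      simp only [Matrix.neg_mul, ← sub_eq_add_neg, h1, h2, h3, h4]
  have hJL : ((fromBlocks 0 (-1) 1 0 : Matrix (Fin n ⊕ Fin n) (Fin n ⊕ Fin n) ℂ) *
      (fromBlocks (Pt' * Al) (-(Pt * Au)) (Qt' * Al) (-(Qt * Au)))) *
      (fromBlocks P Q P' Q') = 1 := by
    rw [Matrix.mul_assoc, hLC, Matrix.fromBlocks_multiply]
    simp [← Matrix.fromBlocks_one]
  have hCJ : (fromBlocks P Q P' Q') *
      ((fromBlocks 0 (-1) 1 0 : Matrix (Fin n ⊕ Fin n) (Fin n ⊕ Fin n) ℂ) *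
      (fromBlocks (Pt' * Al) (-(Pt * Au)) (Qt' * Al) (-(Qt * Au)))) = 1 :=
    mul_eq_one_comm.mp hJL
  rw [Matrix.fromBlocks_multiply, Matrix.fromBlocks_multiply, ← Matrix.fromBlocks_one] at hCJ
  have h12 := congrArg Matrix.toBlocks₁₂ hCJ
  have h22 := congrArg Matrix.toBlocks₂₂ hCJ
  simp only [Matrix.toBlocks_fromBlocks₁₂, Matrix.toBlocks_fromBlocks₂₂] at h12 h22
  constructor
  · have : (P * Qt - Q * Pt) * Au = 0 := by
      rw [Matrix.sub_mul]
      simpa [Matrix.mul_assoc, sub_eq_add_neg] using h12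
    calc P * Qt - Q * Pt = (P * Qt - Q * Pt) * Au * Au⁻¹ := by
          rw [Matrix.mul_nonsing_inv_cancel_right _ _ ((Matrix.isUnit_iff_isUnit_det _).mp hAu)]
      _ = 0 := by rw [this, Matrix.zero_mul]
  · rw [Matrix.sub_mul]
    simpa [Matrix.mul_assoc, sub_eq_add_neg] using h22

/-- The kernel `K m k = P m * Qt k - Q m * Pt k` solves equation (1) in its first index. -/
lemma kkSol {n : ℕ} {d a b : ℕ → Mat n} {z0 : ℂ} {P Q Pt Qt : ℕ → Mat n}
    (hP : SolEq1 d a b z0 P) (hQ : SolEq1 d a b z0 Q) (k j : ℕ) :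
    Alo b j * (P j * Qt k - Q j * Pt k) + d j * (P (j+1) * Qt k - Q (j+1) * Pt k)
      + a j * (P (j+2) * Qt k - Q (j+2) * Pt k)
      = z0 • (P (j+1) * Qt k - Q (j+1) * Pt k) := by
  have h : (Alo b j * P j + d j * P (j+1) + a j * P (j+2)) * Qt k
      - (Alo b j * Q j + d j * Q (j+1) + a j * Q (j+2)) * Pt k
      = (z0 • P (j+1)) * Qt k - (z0 • Q (j+1)) * Pt k := by rw [hP j, hQ j]
  simp only [Matrix.add_mul, Matrix.smul_mul, Matrix.mul_sub, smul_sub,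
    Matrix.mul_assoc] at h ⊢
  abel_nf at h ⊢
  exact h

/-- mulVec of a finite sum. -/
lemma mulVec_sumr {n : ℕ} (A : Mat n) (s : Finset ℕ) (g : ℕ → Fin n → ℂ) :
    A *ᵥ (∑ k ∈ s, g k) = ∑ k ∈ s, A *ᵥ g k := by
  classical
  induction s using Finset.induction with
  | empty => simp [Matrix.mulVec_zero]
  | @insert _ _ h ih => rw [Finset.sum_insert h, Finset.sum_insert h, Matrix.mulVec_add, ih]

/-- Variation of parameters: every solution of (1v) at `z` is expressed through a solution
of the inhomogeneous equation at `z0` via the kernel `K`. -/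
theorem representation {n : ℕ} {d a b : ℕ → Mat n} {z0 z : ℂ} {K : ℕ → ℕ → Mat n}
    {u w : ℕ → Fin n → ℂ}
    (ha : ∀ j, IsUnit (a j))
    (hKsol : ∀ k j, Alo b j * K j k + d j * K (j+1) k + a j * K (j+2) k = z0 • K (j+1) k)
    (hKdiag : ∀ j, K j j = 0)
    (hKinv : ∀ j, Aup a j * K (j+1) j = 1)
    (hu : SolEq1v d a b z u)
    (hw : SolEq1v d a b z0 w) (hw0 : w 0 = u 0) (hw1 : w 1 = u 1) :
    ∀ m, u m = w m + ∑ k ∈ Finset.range m,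
      K m k *ᵥ (if k = 0 then 0 else (z - z0) • u k) := by
  classical
  set f : ℕ → Fin n → ℂ := fun k => if k = 0 then 0 else (z - z0) • u k with hf
  set U : ℕ → Fin n → ℂ := fun m => w m + ∑ k ∈ Finset.range m, K m k *ᵥ f k with hU
  have key : ∀ j, Alo b j *ᵥ U j + d j *ᵥ U (j+1) + a j *ᵥ U (j+2)
      = z0 • U (j+1) + f (j+1) := by
    intro j
    have e0 : U j = w j + ∑ k ∈ Finset.range j, K j k *ᵥ f k := rfl
    have e1 : U (j+1) = w (j+1) + (∑ k ∈ Finset.range j, K (j+1) k *ᵥ f k)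
        + K (j+1) j *ᵥ f j := by
      rw [hU]; dsimp only; rw [Finset.sum_range_succ]; abel
    have e2 : U (j+2) = w (j+2) + (∑ k ∈ Finset.range j, K (j+2) k *ᵥ f k)
        + K (j+2) j *ᵥ f j + K (j+2) (j+1) *ᵥ f (j+1) := by
      rw [hU]; dsimp only; rw [Finset.sum_range_succ, Finset.sum_range_succ]; abel
    rw [e0, e1, e2]
    simp only [Matrix.mulVec_add, mulVec_sumr]
    have hw' : Alo b j *ᵥ w j = z0 • w (j+1) - d j *ᵥ w (j+1) - a j *ᵥ w (j+2) := by
      rw [← hw j]; abel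
    have hsum : ∑ k ∈ Finset.range j, Alo b j *ᵥ (K j k *ᵥ f k)
        = (∑ k ∈ Finset.range j, z0 • (K (j+1) k *ᵥ f k))
          - (∑ k ∈ Finset.range j, d j *ᵥ (K (j+1) k *ᵥ f k))
          - (∑ k ∈ Finset.range j, a j *ᵥ (K (j+2) k *ᵥ f k)) := by
      rw [← Finset.sum_sub_distrib, ← Finset.sum_sub_distrib]
      refine Finset.sum_congr rfl fun k _ => ?_
      have := congrArg (· *ᵥ f k) (hKsol k j)
      simp only [Matrix.add_mulVec, Matrix.smul_mulVec, ← Matrix.mulVec_mulVec] at this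
      rw [← this]; abel
    have hterm : d j *ᵥ (K (j+1) j *ᵥ f j)
        = z0 • (K (j+1) j *ᵥ f j) - a j *ᵥ (K (j+2) j *ᵥ f j) := by
      have := congrArg (· *ᵥ f j) (hKsol j j)
      simp only [hKdiag j, Matrix.mul_zero, Matrix.zero_mul, zero_add,
        Matrix.add_mulVec, Matrix.smul_mulVec, ← Matrix.mulVec_mulVec] at this
      rw [← this]; abel
    have hterm2 : a j *ᵥ (K (j+2) (j+1) *ᵥ f (j+1)) = f (j+1) := by
      have h := hKinv (j+1)
      have he : Aup a (j+1) = a j := rfl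
      rw [he] at h
      rw [Matrix.mulVec_mulVec, h, Matrix.one_mulVec]
    rw [hw', hsum, hterm, hterm2]
    simp only [smul_add, Finset.smul_sum]
    abel
  have base0 : u 0 = U 0 := by simp [hU, hw0]
  have base1 : u 1 = U 1 := by
    simp [hU, hf, Finset.sum_range_one, Matrix.mulVec_zero, hw1]
  have step : ∀ j, u j = U j → u (j+1) = U (j+1) → u (j+2) = U (j+2) := by
    intro j h0 h1
    have hinv := (Matrix.isUnit_iff_isUnit_det _).mp (ha j)
    have hu' : a j *ᵥ u (j+2) = z0 • u (j+1) + f (j+1) - Alo b j *ᵥ u j - d j *ᵥ u (j+1) := by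
      have := hu j
      have hz : z • u (j+1) = z0 • u (j+1) + f (j+1) := by
        simp only [hf]
        rw [if_neg (Nat.succ_ne_zero j), sub_smul]
        abel
      rw [← hz, ← this]; abel
    have hU' : a j *ᵥ U (j+2) = z0 • U (j+1) + f (j+1) - Alo b j *ᵥ U j - d j *ᵥ U (j+1) := by
      rw [← key j]; abel
    have heq : a j *ᵥ u (j+2) = a j *ᵥ U (j+2) := by rw [hu', hU', h0, h1]
    calc u (j+2) = ((a j)⁻¹ * a j) *ᵥ u (j+2) := by
          rw [Matrix.nonsing_inv_mul _ hinv, Matrix.one_mulVec]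
      _ = (a j)⁻¹ *ᵥ (a j *ᵥ u (j+2)) := by rw [Matrix.mulVec_mulVec]
      _ = (a j)⁻¹ *ᵥ (a j *ᵥ U (j+2)) := by rw [heq]
      _ = U (j+2) := by
          rw [Matrix.mulVec_mulVec, Matrix.nonsing_inv_mul _ hinv, Matrix.one_mulVec]
  intro m
  induction m using Nat.strong_induction_on with
  | _ m ih =>
    match m with
    | 0 => exact base0
    | 1 => exact base1
    | (j+2) => exact step j (ih j (by omega)) (ih (j+1) (by omega))

/-- Domination criterion for membership in `ℓ^p`. -/
lemma memℓp_of_dominated {E F : Type*} [NormedAddCommGroup E] [NormedAddCommGroup F]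
    {f : ℕ → E} {g : ℕ → F} {p : ℝ≥0∞} (hp : 1 ≤ p) (hg : Memℓp g p)
    (h : ∀ m, ‖f m‖ ≤ ‖g m‖) : Memℓp f p := by
  rcases p.trichotomy with (rfl | rfl | hpt)
  · exact absurd hp (by simp)
  · apply memℓp_infty
    obtain ⟨A, hA⟩ := hg.bddAbove
    refine ⟨A, ?_⟩
    rintro x ⟨m, rfl⟩
    exact (h m).trans (hA ⟨m, rfl⟩)
  · apply memℓp_gen
    refine Summable.of_nonneg_of_le (fun m => by positivity) (fun m => ?_) (hg.summable hpt)
    exact Real.rpow_le_rpow (norm_nonneg _) (h m) (le_of_lt hpt)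

/-- Hölder: the termwise product of an `ℓ^p` and an `ℓ^q` sequence is summable. -/
lemma holder_summable {f g : ℕ → ℝ} {p q : ℝ≥0∞} (hp : 1 ≤ p) (hq : 1 ≤ q)
    (hpq : 1/p + 1/q = 1) (hf : Memℓp f p) (hg : Memℓp g q) :
    Summable (fun k => ‖f k‖ * ‖g k‖) := by
  have hp0 : p ≠ 0 := by intro h; rw [h] at hp; simp at hp
  have hq0 : q ≠ 0 := by intro h; rw [h] at hq; simp at hq
  rcases eq_or_ne p ∞ with hptop | hptop
  · subst hptop
    have hq1 : q = 1 := by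
      simp only [one_div, ENNReal.inv_top, zero_add] at hpq
      rwa [ENNReal.inv_eq_one] at hpq
    subst hq1
    obtain ⟨A, hA⟩ := hf.bddAbove
    have hgs : Summable fun k => ‖g k‖ := by
      simpa using hg.summable (by norm_num)
    refine Summable.of_nonneg_of_le (fun k => by positivity) (fun k => ?_) (hgs.mul_left A)
    exact mul_le_mul_of_nonneg_right (hA ⟨k, rfl⟩) (norm_nonneg _)
  rcases eq_or_ne q ∞ with hqtop | hqtop
  · subst hqtop
    have hp1 : p = 1 := by
      simp only [one_div, ENNReal.inv_top, add_zero] at hpq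
      rwa [ENNReal.inv_eq_one] at hpq
    subst hp1
    obtain ⟨A, hA⟩ := hg.bddAbove
    have hfs : Summable fun k => ‖f k‖ := by
      simpa using hf.summable (by norm_num)
    refine Summable.of_nonneg_of_le (fun k => by positivity) (fun k => ?_) (hfs.mul_right A)
    exact mul_le_mul_of_nonneg_left (hA ⟨k, rfl⟩) (norm_nonneg _)
  have hp1 : 1 < p := by
    rcases lt_or_eq_of_le hp with h | h
    · exact h
    · exfalso
      rw [← h] at hpq
      simp only [one_div, inv_one] at hpq
      have : (1:ℝ≥0∞)/q = 0 := by
        have h0 : (1:ℝ≥0∞) + 1/q = 1 + 0 := by simpa using hpq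
        exact (ENNReal.add_right_inj (by simp)).mp h0
      rw [ENNReal.div_eq_zero_iff] at this
      exact hqtop (this.resolve_left one_ne_zero)
  have hconj : p.toReal.HolderConjugate q.toReal := by
    rw [Real.holderConjugate_iff]
    constructor
    · rw [← ENNReal.toReal_one]
      exact ENNReal.toReal_strict_mono hptop hp1
    · have h1 : (1/p) ≠ ∞ := by simp [hp0]
      have h2 : (1/q) ≠ ∞ := by simp [hq0]
      have := congrArg ENNReal.toReal hpq
      rw [ENNReal.toReal_add h1 h2] at this
      simpa [ENNReal.toReal_div] using this
  exact lp.summable_mul hconj (⟨f, hf⟩ : lp (fun _ : ℕ => ℝ) p) (⟨g, hg⟩ : lp (fun _ : ℕ => ℝ) q)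

lemma alo_transpose {n : ℕ} (a : ℕ → Mat n) (j : ℕ) :
    Alo (fun i => (a i)ᵀ) j = (Aup a j)ᵀ := by
  cases j <;> simp [Alo, Aup]

lemma eq2v_transpose {n : ℕ} {d a b : ℕ → Mat n} {z : ℂ} {v : ℕ → Fin n → ℂ} :
    SolEq2v d a b z v ↔
    SolEq1v (fun j => (d j)ᵀ) (fun j => (b j)ᵀ) (fun j => (a j)ᵀ) z (fun m => star (v m)) := by
  constructor
  · intro h j
    have := h j
    dsimp only
    rw [alo_transpose, Matrix.mulVec_transpose, Matrix.mulVec_transpose,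
      Matrix.mulVec_transpose]
    exact this
  · intro h j
    have := h j
    dsimp only at this
    rwa [alo_transpose, Matrix.mulVec_transpose, Matrix.mulVec_transpose,
      Matrix.mulVec_transpose] at this

lemma eq1v_of_eq1 {n : ℕ} {d a b : ℕ → Mat n} {z : ℂ} {Y : ℕ → Mat n}
    (h : SolEq1 d a b z Y) (x : Fin n → ℂ) :
    SolEq1v d a b z (fun m => Y m *ᵥ x) := by
  intro j
  have := congrArg (· *ᵥ x) (h j)
  simpa only [Matrix.add_mulVec, Matrix.smul_mulVec, ← Matrix.mulVec_mulVec] using this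

lemma eq1v_sub {n : ℕ} {d a b : ℕ → Mat n} {z : ℂ} {f g : ℕ → Fin n → ℂ}
    (hf : SolEq1v d a b z f) (hg : SolEq1v d a b z g) :
    SolEq1v d a b z (fun m => f m - g m) := by
  intro j
  dsimp only
  have e : Alo b j *ᵥ (f j - g j) + d j *ᵥ (f (j+1) - g (j+1)) + a j *ᵥ (f (j+2) - g (j+2))
      = (Alo b j *ᵥ f j + d j *ᵥ f (j + 1) + a j *ᵥ f (j + 2))
        - (Alo b j *ᵥ g j + d j *ᵥ g (j + 1) + a j *ᵥ g (j + 2)) := by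
    simp only [Matrix.mulVec_sub]
    abel
  rw [e, hf j, hg j, ← smul_sub]

lemma eq2v_of_eq2 {n : ℕ} {d a b : ℕ → Mat n} {z : ℂ} {Y : ℕ → Mat n}
    (h : SolEq2 d a b z Y) (r : Fin n) :
    SolEq2v d a b z (fun m => star (Y m r)) := by
  intro j
  have hrow : ∀ (M N : Mat n), (M * N) r = M r ᵥ* N := by
    intro M N; funext c; simp [Matrix.mul_apply, Matrix.vecMul, dotProduct]
  simp only [star_star]
  rw [← hrow, ← hrow, ← hrow]
  exact congrFun (h j) r

/-- Bound on `‖M *ᵥ x‖` from an entrywise bound. -/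
lemma mulVec_norm_bound {n : ℕ} (M : Mat n) (B : ℝ) (hB : 0 ≤ B)
    (hent : ∀ i j, ‖M i j‖ ≤ B) (x : Fin n → ℂ) :
    ‖M *ᵥ x‖ ≤ n * B * ‖x‖ := by
  have hx : ∀ j, ‖x j‖ ≤ ‖x‖ := fun j => norm_le_pi_norm x j
  rw [pi_norm_le_iff_of_nonneg (by positivity)]
  intro i
  calc ‖(M *ᵥ x) i‖ = ‖∑ j, M i j * x j‖ := by
        simp [Matrix.mulVec, dotProduct]
    _ ≤ ∑ j, ‖M i j * x j‖ := norm_sum_le _ _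
    _ ≤ ∑ _j : Fin n, B * ‖x‖ := Finset.sum_le_sum fun j _ => by
        rw [norm_mul]
        exact mul_le_mul (hent i j) (hx j) (norm_nonneg _) hB
    _ = n * B * ‖x‖ := by
        rw [Finset.sum_const, Finset.card_univ, Fintype.card_fin, nsmul_eq_mul]
        ring

end Aux

/-- The main one-sided statement: if all solutions of (1v) at `z0` are in `ℓ^p` and all
solutions of (2v) at `z0` are in `ℓ^q`, then all solutions of (1v) at any `z` are in `ℓ^p`. -/
theorem oneSide {n : ℕ} (d a b : ℕ → Mat n)
    (ha : ∀ j, IsUnit (a j)) (hb : ∀ j, IsUnit (b j))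
    (p q : ℝ≥0∞) (hp : 1 ≤ p) (hq : 1 ≤ q) (hpq : 1 / p + 1 / q = 1) (z0 : ℂ)
    (h1 : ∀ u : ℕ → Fin n → ℂ, SolEq1v d a b z0 u → Memℓp u p)
    (h2 : ∀ v : ℕ → Fin n → ℂ, SolEq2v d a b z0 v → Memℓp v q)
    (z : ℂ) (u : ℕ → Fin n → ℂ) (hu : SolEq1v d a b z u) : Memℓp u p := by
  classical
  set P : ℕ → Mat n := sol d a b z0 0 1 with hPdef
  set Q : ℕ → Mat n := sol d a b z0 (-1) 0 with hQdef
  set Pt : ℕ → Mat n := rsol d a b z0 0 1 with hPtdef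
  set Qt : ℕ → Mat n := rsol d a b z0 (-1) 0 with hQtdef
  have hPs : SolEq1 d a b z0 P := sol_isSol d a b ha z0 0 1
  have hQs : SolEq1 d a b z0 Q := sol_isSol d a b ha z0 (-1) 0
  have hPts : SolEq2 d a b z0 Pt := rsol_isSol d a b hb z0 0 1
  have hQts : SolEq2 d a b z0 Qt := rsol_isSol d a b hb z0 (-1) 0
  have hAupUnit : ∀ j, IsUnit (Aup a j) := by
    intro j
    cases j with
    | zero => exact isUnit_one.neg
    | succ j => exact ha j
  -- initial values
  have hP0 : P 0 = 0 := by rw [hPdef, sol]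
  have hP1 : P 1 = 1 := by rw [hPdef, sol]
  have hQ0 : Q 0 = -1 := by rw [hQdef, sol]
  have hQ1 : Q 1 = 0 := by rw [hQdef, sol]
  have hPt0 : Pt 0 = 0 := by rw [hPtdef, rsol]
  have hPt1 : Pt 1 = 1 := by rw [hPtdef, rsol]
  have hQt0 : Qt 0 = -1 := by rw [hQtdef, rsol]
  have hQt1 : Qt 1 = 0 := by rw [hQtdef, rsol]
  have hAlo0 : Alo b 0 = -1 := rfl
  have hAup0 : Aup a 0 = -1 := rfl
  -- Wronskian relations
  have w1 : ∀ j, Pt (j+1) * Alo b j * P j - Pt j * Aup a j * P (j+1) = 0 := by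
    intro j
    rw [wronsk hPts hPs j, hP0, hP1, hPt0, hPt1, hAlo0, hAup0]
    simp
  have w2 : ∀ j, Pt (j+1) * Alo b j * Q j - Pt j * Aup a j * Q (j+1) = 1 := by
    intro j
    rw [wronsk hPts hQs j, hQ0, hQ1, hPt0, hPt1, hAlo0, hAup0]
    simp
  have w3 : ∀ j, Qt (j+1) * Alo b j * P j - Qt j * Aup a j * P (j+1) = -1 := by
    intro j
    rw [wronsk hQts hPs j, hP0, hP1, hQt0, hQt1, hAlo0, hAup0]
    simp
  have w4 : ∀ j, Qt (j+1) * Alo b j * Q j - Qt j * Aup a j * Q (j+1) = 0 := by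
    intro j
    rw [wronsk hQts hQs j, hQ0, hQ1, hQt0, hQt1, hAlo0, hAup0]
    simp
  have hK := fun j => myflip (hAupUnit j) (w1 j) (w2 j) (w3 j) (w4 j)
  set K : ℕ → ℕ → Mat n := fun m k => P m * Qt k - Q m * Pt k with hKdef
  have hKdiag : ∀ j, K j j = 0 := fun j => (hK j).1
  have hKinv : ∀ j, Aup a j * K (j+1) j = 1 := fun j => mul_eq_one_comm.mp (hK j).2
  have hKsol : ∀ k j, Alo b j * K j k + d j * K (j+1) k + a j * K (j+2) k = z0 • K (j+1) k :=
    fun k j => kkSol hPs hQs k j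
  -- the comparison solution
  set w : ℕ → Fin n → ℂ := fun m => P m *ᵥ u 1 - Q m *ᵥ u 0 with hwdef
  have hwsol : SolEq1v d a b z0 w :=
    eq1v_sub (eq1v_of_eq1 hPs (u 1)) (eq1v_of_eq1 hQs (u 0))
  have hw0 : w 0 = u 0 := by
    simp [hwdef, hP0, hQ0, Matrix.zero_mulVec, Matrix.neg_mulVec, Matrix.one_mulVec]
  have hw1 : w 1 = u 1 := by
    simp [hwdef, hP1, hQ1, Matrix.zero_mulVec, Matrix.one_mulVec]
  have rep := representation ha hKsol hKdiag hKinv hu hwsol hw0 hw1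
  -- ℓ^p data
  set colP : Fin n → ℕ → Fin n → ℂ := fun c m => P m *ᵥ Pi.single c 1 with hcolPdef
  set colQ : Fin n → ℕ → Fin n → ℂ := fun c m => Q m *ᵥ Pi.single c 1 with hcolQdef
  set rowPt : Fin n → ℕ → Fin n → ℂ := fun r k => star (Pt k r) with hrowPtdef
  set rowQt : Fin n → ℕ → Fin n → ℂ := fun r k => star (Qt k r) with hrowQtdef
  have hcolP : ∀ c, Memℓp (colP c) p := fun c => h1 _ (eq1v_of_eq1 hPs _)
  have hcolQ : ∀ c, Memℓp (colQ c) p := fun c => h1 _ (eq1v_of_eq1 hQs _)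
  have hrowPt : ∀ r, Memℓp (rowPt r) q := fun r => h2 _ (eq2v_of_eq2 hPts r)
  have hrowQt : ∀ r, Memℓp (rowQt r) q := fun r => h2 _ (eq2v_of_eq2 hQts r)
  set Cm : ℕ → ℝ := fun m => ∑ c : Fin n, (‖colP c m‖ + ‖colQ c m‖) with hCmdef
  set Ct : ℕ → ℝ := fun k => ∑ r : Fin n, (‖rowPt r k‖ + ‖rowQt r k‖) with hCtdef
  have hCm0 : ∀ m, 0 ≤ Cm m := fun m =>
    Finset.sum_nonneg fun c _ => by positivity
  have hCt0 : ∀ k, 0 ≤ Ct k := fun k =>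
    Finset.sum_nonneg fun r _ => by positivity
  have hCmp : Memℓp Cm p := by
    apply Memℓp.finset_sum
    intro c _
    exact Memℓp.add
      (memℓp_of_dominated hp (hcolP c) (fun m => by rw [norm_norm]))
      (memℓp_of_dominated hp (hcolQ c) (fun m => by rw [norm_norm]))
  have hCtq : Memℓp Ct q := by
    apply Memℓp.finset_sum
    intro r _
    exact Memℓp.add
      (memℓp_of_dominated hq (hrowPt r) (fun m => by rw [norm_norm]))
      (memℓp_of_dominated hq (hrowQt r) (fun m => by rw [norm_norm]))
  -- entry bounds
  have hPE : ∀ m i c, ‖P m i c‖ ≤ ‖colP c m‖ := by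
    intro m i c
    have : colP c m i = P m i c := by
      simp [hcolPdef, Matrix.mulVec_single]
    rw [← this]
    exact norm_le_pi_norm _ i
  have hQE : ∀ m i c, ‖Q m i c‖ ≤ ‖colQ c m‖ := by
    intro m i c
    have : colQ c m i = Q m i c := by
      simp [hcolQdef, Matrix.mulVec_single]
    rw [← this]
    exact norm_le_pi_norm _ i
  have hPtE : ∀ k r j, ‖Pt k r j‖ ≤ Ct k := by
    intro k r j
    have h1' : ‖Pt k r j‖ = ‖rowPt r k j‖ := by
      simp [hrowPtdef, Pi.star_apply]
    rw [h1']
    refine (norm_le_pi_norm _ j).trans ?_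
    calc ‖rowPt r k‖ ≤ ‖rowPt r k‖ + ‖rowQt r k‖ := le_add_of_nonneg_right (norm_nonneg _)
      _ ≤ Ct k := Finset.single_le_sum (f := fun r => ‖rowPt r k‖ + ‖rowQt r k‖)
          (fun r _ => by positivity) (Finset.mem_univ r)
  have hQtE : ∀ k r j, ‖Qt k r j‖ ≤ Ct k := by
    intro k r j
    have h1' : ‖Qt k r j‖ = ‖rowQt r k j‖ := by
      simp [hrowQtdef, Pi.star_apply]
    rw [h1']
    refine (norm_le_pi_norm _ j).trans ?_
    calc ‖rowQt r k‖ ≤ ‖rowPt r k‖ + ‖rowQt r k‖ := le_add_of_nonneg_left (norm_nonneg _)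
      _ ≤ Ct k := Finset.single_le_sum (f := fun r => ‖rowPt r k‖ + ‖rowQt r k‖)
          (fun r _ => by positivity) (Finset.mem_univ r)
  have hPsum : ∀ m i, (∑ c : Fin n, ‖P m i c‖) ≤ Cm m := by
    intro m i
    refine Finset.sum_le_sum fun c _ => ?_
    exact (hPE m i c).trans (le_add_of_nonneg_right (norm_nonneg _))
  have hQsum : ∀ m i, (∑ c : Fin n, ‖Q m i c‖) ≤ Cm m := by
    intro m i
    refine Finset.sum_le_sum fun c _ => ?_
    exact (hQE m i c).trans (le_add_of_nonneg_left (norm_nonneg _))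
  have hPCm : ∀ m i c, ‖P m i c‖ ≤ Cm m := by
    intro m i c
    refine le_trans ?_ (hPsum m i)
    exact Finset.single_le_sum (f := fun c => ‖P m i c‖) (fun c _ => norm_nonneg _)
      (Finset.mem_univ c)
  have hQCm : ∀ m i c, ‖Q m i c‖ ≤ Cm m := by
    intro m i c
    refine le_trans ?_ (hQsum m i)
    exact Finset.single_le_sum (f := fun c => ‖Q m i c‖) (fun c _ => norm_nonneg _)
      (Finset.mem_univ c)
  have hKent : ∀ m k i j, ‖K m k i j‖ ≤ 2 * (Cm m * Ct k) := by
    intro m k i j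
    have hPQt : ‖(P m * Qt k) i j‖ ≤ Cm m * Ct k := by
      rw [Matrix.mul_apply]
      calc ‖∑ c : Fin n, P m i c * Qt k c j‖ ≤ ∑ c : Fin n, ‖P m i c * Qt k c j‖ :=
            norm_sum_le _ _
        _ ≤ ∑ c : Fin n, ‖P m i c‖ * Ct k := Finset.sum_le_sum fun c _ => by
            rw [norm_mul]
            exact mul_le_mul_of_nonneg_left (hQtE k c j) (norm_nonneg _)
        _ = (∑ c : Fin n, ‖P m i c‖) * Ct k := by rw [Finset.sum_mul]
        _ ≤ Cm m * Ct k := mul_le_mul_of_nonneg_right (hPsum m i) (hCt0 k)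
    have hQPt : ‖(Q m * Pt k) i j‖ ≤ Cm m * Ct k := by
      rw [Matrix.mul_apply]
      calc ‖∑ c : Fin n, Q m i c * Pt k c j‖ ≤ ∑ c : Fin n, ‖Q m i c * Pt k c j‖ :=
            norm_sum_le _ _
        _ ≤ ∑ c : Fin n, ‖Q m i c‖ * Ct k := Finset.sum_le_sum fun c _ => by
            rw [norm_mul]
            exact mul_le_mul_of_nonneg_left (hPtE k c j) (norm_nonneg _)
        _ = (∑ c : Fin n, ‖Q m i c‖) * Ct k := by rw [Finset.sum_mul]
        _ ≤ Cm m * Ct k := mul_le_mul_of_nonneg_right (hQsum m i) (hCt0 k)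
    calc ‖K m k i j‖ = ‖(P m * Qt k) i j - (Q m * Pt k) i j‖ := rfl
      _ ≤ ‖(P m * Qt k) i j‖ + ‖(Q m * Pt k) i j‖ := norm_sub_le _ _
      _ ≤ Cm m * Ct k + Cm m * Ct k := add_le_add hPQt hQPt
      _ = 2 * (Cm m * Ct k) := by ring
  have hKvec : ∀ m k (x : Fin n → ℂ), ‖K m k *ᵥ x‖ ≤ n * (2 * (Cm m * Ct k)) * ‖x‖ := by
    intro m k x
    exact mulVec_norm_bound _ _
      (mul_nonneg (by norm_num) (mul_nonneg (hCm0 m) (hCt0 k))) (hKent m k) x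
  -- bound on w
  set W : ℝ := n * (‖u 1‖ + ‖u 0‖) with hWdef
  have hW0 : 0 ≤ W := by positivity
  have hwb : ∀ m, ‖w m‖ ≤ W * Cm m := by
    intro m
    have hp1 : ‖P m *ᵥ u 1‖ ≤ n * Cm m * ‖u 1‖ :=
      mulVec_norm_bound _ _ (hCm0 m) (fun i c => hPCm m i c) _
    have hq1 : ‖Q m *ᵥ u 0‖ ≤ n * Cm m * ‖u 0‖ :=
      mulVec_norm_bound _ _ (hCm0 m) (fun i c => hQCm m i c) _
    calc ‖w m‖ ≤ ‖P m *ᵥ u 1‖ + ‖Q m *ᵥ u 0‖ := norm_sub_le _ _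
      _ ≤ n * Cm m * ‖u 1‖ + n * Cm m * ‖u 0‖ := add_le_add hp1 hq1
      _ = W * Cm m := by rw [hWdef]; ring
  -- main recursive bound
  set κ : ℝ := 2 * n * ‖z - z0‖ with hκdef
  have hκ0 : 0 ≤ κ := by positivity
  set T : ℕ → ℝ := fun m => ∑ k ∈ Finset.range m, Ct k * ‖u k‖ with hTdef
  have hT0 : ∀ m, 0 ≤ T m := fun m =>
    Finset.sum_nonneg fun k _ => mul_nonneg (hCt0 k) (norm_nonneg _)
  have hTmono : Monotone T := by
    intro m m' hmm'
    exact Finset.sum_le_sum_of_subset_of_nonneg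
      (Finset.range_subset_range.mpr hmm')
      (fun k _ _ => mul_nonneg (hCt0 k) (norm_nonneg _))
  have hub : ∀ m, ‖u m‖ ≤ W * Cm m + κ * Cm m * T m := by
    intro m
    rw [rep m]
    calc ‖w m + ∑ k ∈ Finset.range m, K m k *ᵥ (if k = 0 then 0 else (z - z0) • u k)‖
        ≤ ‖w m‖ + ‖∑ k ∈ Finset.range m, K m k *ᵥ (if k = 0 then 0 else (z - z0) • u k)‖ :=
          norm_add_le _ _
      _ ≤ W * Cm m + ∑ k ∈ Finset.range m,
          ‖K m k *ᵥ (if k = 0 then 0 else (z - z0) • u k)‖ :=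
          add_le_add (hwb m) (norm_sum_le _ _)
      _ ≤ W * Cm m + ∑ k ∈ Finset.range m, κ * Cm m * (Ct k * ‖u k‖) := by
          refine add_le_add_right (Finset.sum_le_sum fun k _ => ?_) _
          have hfk : ‖(if k = 0 then (0 : Fin n → ℂ) else (z - z0) • u k)‖
              ≤ ‖z - z0‖ * ‖u k‖ := by
            split_ifs with hk
            · simp; positivity
            · rw [norm_smul]
          calc ‖K m k *ᵥ (if k = 0 then 0 else (z - z0) • u k)‖
              ≤ n * (2 * (Cm m * Ct k)) * ‖(if k = 0 then (0:Fin n → ℂ) else (z - z0) • u k)‖ :=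
                hKvec m k _
            _ ≤ n * (2 * (Cm m * Ct k)) * (‖z - z0‖ * ‖u k‖) := by
                refine mul_le_mul_of_nonneg_left hfk ?_
                exact mul_nonneg (Nat.cast_nonneg n)
                  (mul_nonneg (by norm_num) (mul_nonneg (hCm0 m) (hCt0 k)))
            _ = κ * Cm m * (Ct k * ‖u k‖) := by rw [hκdef]; ring
      _ = W * Cm m + κ * Cm m * T m := by
          rw [hTdef, ← Finset.mul_sum]
  -- summability of the product, tail smallness
  have hprod : Summable (fun k => Cm k * Ct k) := by
    have := holder_summable hp hq hpq hCmp hCtq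
    have heq : (fun k => ‖Cm k‖ * ‖Ct k‖) = fun k => Cm k * Ct k := by
      funext k
      rw [Real.norm_eq_abs, Real.norm_eq_abs, abs_of_nonneg (hCm0 k), abs_of_nonneg (hCt0 k)]
    rwa [heq] at this
  set Stot : ℝ := ∑' k, Cm k * Ct k with hStotdef
  have hpartial : ∀ s : Finset ℕ, (∑ k ∈ s, Cm k * Ct k) ≤ Stot :=
    fun s => hprod.sum_le_tsum s (fun k _ => mul_nonneg (hCm0 k) (hCt0 k))
  set ε : ℝ := (2 * (κ + 1))⁻¹ with hεdef
  have h2κ : (0:ℝ) < 2 * (κ + 1) := by linarith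
  have hε : 0 < ε := by positivity
  obtain ⟨s, hs⟩ := summable_iff_vanishing.mp hprod (Set.Ioo (-ε) ε)
    (Ioo_mem_nhds (by linarith) hε)
  set N : ℕ := s.sup id + 1 with hNdef
  have hIco : ∀ m, (∑ k ∈ Finset.Ico N (N + m), Cm k * Ct k) < ε := by
    intro m
    have hdisj : Disjoint (Finset.Ico N (N + m)) s := by
      rw [Finset.disjoint_left]
      intro k hk hks
      have h1' : N ≤ k := (Finset.mem_Ico.mp hk).1
      have h2' : k ≤ s.sup id := Finset.le_sup (f := id) hks
      omega
    exact (hs _ hdisj).2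
  have hκε : κ * ε ≤ 1 / 2 := by
    have hεid : ε * (2 * (κ + 1)) = 1 := inv_mul_cancel₀ (ne_of_gt h2κ)
    nlinarith [mul_nonneg hκ0 hε.le]
  -- uniform bound on T
  set M : ℝ := 2 * (T N + W * Stot) with hMdef
  have hTbound : ∀ m, T (N + m) ≤ M := by
    intro m
    have hsplit : T (N + m) = T N + ∑ k ∈ Finset.Ico N (N + m), Ct k * ‖u k‖ := by
      rw [hTdef]
      dsimp only
      rw [Finset.range_eq_Ico,
        ← Finset.sum_Ico_consecutive _ (Nat.zero_le N) (Nat.le_add_right N m),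
        Finset.range_eq_Ico]
    have hstep : ∀ k ∈ Finset.Ico N (N + m),
        Ct k * ‖u k‖ ≤ W * (Cm k * Ct k) + κ * (Cm k * Ct k) * T (N + m) := by
      intro k hk
      have hkm : k ≤ N + m := le_of_lt (Finset.mem_Ico.mp hk).2
      calc Ct k * ‖u k‖ ≤ Ct k * (W * Cm k + κ * Cm k * T k) :=
            mul_le_mul_of_nonneg_left (hub k) (hCt0 k)
        _ = W * (Cm k * Ct k) + κ * (Cm k * Ct k) * T k := by ring
        _ ≤ W * (Cm k * Ct k) + κ * (Cm k * Ct k) * T (N + m) := by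
            refine add_le_add_right ?_ _
            exact mul_le_mul_of_nonneg_left (hTmono hkm)
              (mul_nonneg hκ0 (mul_nonneg (hCm0 k) (hCt0 k)))
    have hsum2 : (∑ k ∈ Finset.Ico N (N + m), Ct k * ‖u k‖)
        ≤ W * (∑ k ∈ Finset.Ico N (N + m), Cm k * Ct k)
          + κ * (∑ k ∈ Finset.Ico N (N + m), Cm k * Ct k) * T (N + m) := by
      calc (∑ k ∈ Finset.Ico N (N + m), Ct k * ‖u k‖)
          ≤ ∑ k ∈ Finset.Ico N (N + m),
              (W * (Cm k * Ct k) + κ * (Cm k * Ct k) * T (N + m)) :=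
            Finset.sum_le_sum hstep
        _ = W * (∑ k ∈ Finset.Ico N (N + m), Cm k * Ct k)
            + κ * (∑ k ∈ Finset.Ico N (N + m), Cm k * Ct k) * T (N + m) := by
            rw [Finset.sum_add_distrib]
            congr 1
            · exact (Finset.mul_sum _ _ _).symm
            · calc ∑ k ∈ Finset.Ico N (N + m), κ * (Cm k * Ct k) * T (N + m)
                  = ∑ k ∈ Finset.Ico N (N + m), (Cm k * Ct k) * (κ * T (N + m)) :=
                    Finset.sum_congr rfl fun k _ => by ring
                _ = (∑ k ∈ Finset.Ico N (N + m), Cm k * Ct k) * (κ * T (N + m)) :=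
                    (Finset.sum_mul _ _ _).symm
                _ = κ * (∑ k ∈ Finset.Ico N (N + m), Cm k * Ct k) * T (N + m) := by ring
    have hWterm : W * (∑ k ∈ Finset.Ico N (N + m), Cm k * Ct k) ≤ W * Stot :=
      mul_le_mul_of_nonneg_left (hpartial _) hW0
    have hκterm : κ * (∑ k ∈ Finset.Ico N (N + m), Cm k * Ct k) * T (N + m)
        ≤ (1 / 2) * T (N + m) := by
      refine mul_le_mul_of_nonneg_right ?_ (hT0 _)
      calc κ * (∑ k ∈ Finset.Ico N (N + m), Cm k * Ct k) ≤ κ * ε :=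
            mul_le_mul_of_nonneg_left (hIco m).le hκ0
        _ ≤ 1 / 2 := hκε
    have := hsplit ▸ (add_le_add_left (hsum2.trans (add_le_add hWterm hκterm)) (T N))
    rw [hMdef]
    linarith [this]
  have hTall : ∀ m, T m ≤ M := by
    intro m
    exact (hTmono (Nat.le_add_left m N)).trans (hTbound m)
  -- conclusion
  have hfinal : ∀ m, ‖u m‖ ≤ (W + κ * M) * Cm m := by
    intro m
    calc ‖u m‖ ≤ W * Cm m + κ * Cm m * T m := hub m
      _ ≤ W * Cm m + κ * Cm m * M := by
          refine add_le_add_right ?_ _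
          exact mul_le_mul_of_nonneg_left (hTall m) (mul_nonneg hκ0 (hCm0 m))
      _ = (W + κ * M) * Cm m := by ring
  refine memℓp_of_dominated hp (hCmp.const_mul (W + κ * M)) fun m => ?_
  refine (hfinal m).trans ?_
  rw [Real.norm_eq_abs]
  exact le_abs_self _

/-- Theorem 1: if for some `z₀` all solutions of (1v) are in `l^p_n` and
all solutions of (2v) are in `l^q_n` (`1/p + 1/q = 1`), then the same holds for every
`z ∈ ℂ`. -/
theorem statement9 {n : ℕ} (hn : 1 ≤ n) (d a b : ℕ → Mat n)
    (ha : ∀ j, IsUnit (a j)) (hb : ∀ j, IsUnit (b j))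
    (p q : ℝ≥0∞) (hp : 1 ≤ p) (hpq : 1 / p + 1 / q = 1) (z0 : ℂ)
    (h1 : ∀ u : ℕ → Fin n → ℂ, SolEq1v d a b z0 u → Memℓp u p)
    (h2 : ∀ v : ℕ → Fin n → ℂ, SolEq2v d a b z0 v → Memℓp v q)
    (z : ℂ) :
    (∀ u : ℕ → Fin n → ℂ, SolEq1v d a b z u → Memℓp u p) ∧
    (∀ v : ℕ → Fin n → ℂ, SolEq2v d a b z v → Memℓp v q) := by
  have hq : 1 ≤ q := by
    have h1q : (1:ℝ≥0∞)/q ≤ 1 := by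
      calc (1:ℝ≥0∞)/q ≤ 1/p + 1/q := self_le_add_left _ _
        _ = 1 := hpq
    rw [one_div] at h1q
    rwa [ENNReal.inv_le_one] at h1q
  constructor
  · exact fun u hu => oneSide d a b ha hb p q hp hq hpq z0 h1 h2 z u hu
  · -- transposed system
    set d' : ℕ → Mat n := fun j => (d j)ᵀ with hd'
    set a' : ℕ → Mat n := fun j => (b j)ᵀ with ha'
    set b' : ℕ → Mat n := fun j => (a j)ᵀ with hb'
    have ha'U : ∀ j, IsUnit (a' j) := by
      intro j
      rw [ha']
      rw [Matrix.isUnit_iff_isUnit_det, Matrix.det_transpose, ← Matrix.isUnit_iff_isUnit_det]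
      exact hb j
    have hb'U : ∀ j, IsUnit (b' j) := by
      intro j
      rw [hb']
      rw [Matrix.isUnit_iff_isUnit_det, Matrix.det_transpose, ← Matrix.isUnit_iff_isUnit_det]
      exact ha j
    have hqp : 1 / q + 1 / p = 1 := by rw [add_comm]; exact hpq
    have h1' : ∀ u : ℕ → Fin n → ℂ, SolEq1v d' a' b' z0 u → Memℓp u q := by
      intro u hu'
      have hvstar : SolEq1v d' a' b' z0 (fun m => star (star (u m))) := by
        simpa [star_star] using hu'
      have hv : SolEq2v d a b z0 (fun m => star (u m)) := eq2v_transpose.mpr hvstar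
      have := h2 _ hv
      refine memℓp_of_dominated hq this fun m => ?_
      simp
    have h2' : ∀ v : ℕ → Fin n → ℂ, SolEq2v d' a' b' z0 v → Memℓp v p := by
      intro v hv'
      have := eq2v_transpose.mp hv'
      have h1v : SolEq1v d a b z0 (fun m => star (v m)) := by
        have hdd : (fun j => (d' j)ᵀ) = d := by funext j; simp [hd']
        have haa : (fun j => (b' j)ᵀ) = a := by funext j; simp [hb']
        have hbb : (fun j => (a' j)ᵀ) = b := by funext j; simp [ha']
        rwa [hdd, haa, hbb] at this
      have := h1 _ h1v
      refine memℓp_of_dominated hp this fun m => ?_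
      simp
    intro v hv
    have hu' : SolEq1v d' a' b' z (fun m => star (v m)) := eq2v_transpose.mp hv
    have := oneSide d' a' b' ha'U hb'U q p hq hp hqp z0 h1' h2' z _ hu'
    refine memℓp_of_dominated hq this fun m => ?_
    simp
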